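/- Let μ = (μ_ℝ, μ_ℂ) : M → ℝ × ℂ be continuous and define Φ : M × ℂ² → ℝ × ℂ by Φ(m,z,w) = (μ_ℝ(m) − ½(|z|² + |w|²), μ_ℂ(m) − i·z·w̄). Then for ε = (ε_ℝ, ε_ℂ), the image of the projection π : Φ⁻¹(ε) → M is exactly {m ∈ M : μ_ℝ(m) − ε_ℝ ≥ |μ_ℂ(m) − ε_ℂ|}. -/

import Mathlib

/-- Hypersymplectic cut, set-theoretic level: for
`Φ(m,z,w) = (μ_ℝ(m) − ½(|z|² + |w|²), μ_ℂ(m) − i·z·w̄)` on `M × ℂ²` and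
`ε = (ε_ℝ, ε_ℂ)`, the image of the projection `π : Φ⁻¹(ε) → M` is exactly
`{m ∈ M : μ_ℝ(m) − ε_ℝ ≥ |μ_ℂ(m) − ε_ℂ|}`. -/
theorem stmt_19 {M : Type*} [TopologicalSpace M]
    (μR : M → ℝ) (μC : M → ℂ) (hμR : Continuous μR) (hμC : Continuous μC)
    (εR : ℝ) (εC : ℂ) :
    (fun x : M × ℂ × ℂ => x.1) ''
        {x : M × ℂ × ℂ |
          (μR x.1 - (1 / 2 : ℝ) * (‖x.2.1‖ ^ 2 + ‖x.2.2‖ ^ 2),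
            μC x.1 - Complex.I * x.2.1 * (starRingEnd ℂ x.2.2)) = (εR, εC)} =
      {m : M | ‖μC m - εC‖ ≤ μR m - εR} := by
  ext m
  simp only [Set.mem_image, Set.mem_setOf_eq, Prod.mk.injEq]
  constructor
  · rintro ⟨⟨m', z, w⟩, ⟨h1, h2⟩, rfl⟩
    simp only at h1 h2 ⊢
    have hb : μC m' - εC = Complex.I * z * (starRingEnd ℂ w) := by
      rw [sub_eq_iff_eq_add] at h2 ⊢; linear_combination h2
    rw [hb]
    have : ‖Complex.I * z * (starRingEnd ℂ w)‖ =
        ‖z‖ * ‖w‖ := by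
      simp [map_mul]
    rw [this]
    nlinarith [sq_nonneg (‖z‖ - ‖w‖), norm_nonneg z,
      norm_nonneg w]
  · intro h
    set a := μR m - εR with ha
    set b := μC m - εC with hb
    have hbn : (0:ℝ) ≤ ‖b‖ := norm_nonneg b
    by_cases h0 : b = 0
    · refine ⟨⟨m, (Real.sqrt (2*a) : ℂ), 0⟩, ?_, rfl⟩
      have ha0 : 0 ≤ 2*a := by rw [h0] at h; simp at h; linarith
      simp only [Prod.mk.injEq]
      constructor
      · have : ‖((Real.sqrt (2*a) : ℂ))‖ = Real.sqrt (2*a) := by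
          rw [Complex.norm_real, Real.norm_eq_abs]; exact abs_of_nonneg (Real.sqrt_nonneg _)
        rw [this]
        rw [Real.sq_sqrt ha0]
        simp only [norm_zero]
        ring_nf; simp only [ha]; ring
      · simp
        rw [← sub_eq_zero]; exact h0
    · have hbpos : 0 < ‖b‖ := norm_pos_iff.mpr h0
      have hapos : 0 < a := lt_of_lt_of_le hbpos h
      set s := a + Real.sqrt (a^2 - ‖b‖ ^ 2) with hs
      have hd : 0 ≤ a^2 - ‖b‖ ^ 2 := by nlinarith
      have hsq : Real.sqrt (a^2 - ‖b‖ ^ 2) ^ 2 = a^2 - ‖b‖ ^2 :=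
        Real.sq_sqrt hd
      have hspos : 0 < s := by
        have := Real.sqrt_nonneg (a^2 - ‖b‖ ^ 2); linarith
      have hsum : s + ‖b‖ ^ 2 / s = 2 * a := by
        field_simp
        nlinarith [hsq]
      have hsr : ‖((Real.sqrt s : ℂ))‖ = Real.sqrt s := by
        rw [Complex.norm_real, Real.norm_eq_abs]; exact abs_of_nonneg (Real.sqrt_nonneg _)
      have hsrne : (Real.sqrt s : ℂ) ≠ 0 := by
        simp [Real.sqrt_ne_zero', hspos]
      refine ⟨⟨m, (Real.sqrt s : ℂ), Complex.I * (starRingEnd ℂ b) / (Real.sqrt s : ℂ)⟩, ?_, rfl⟩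
      simp only [Prod.mk.injEq]
      constructor
      · rw [hsr]
        have : ‖Complex.I * (starRingEnd ℂ b) / (Real.sqrt s : ℂ)‖ =
            ‖b‖ / Real.sqrt s := by
          simp [map_div₀, map_mul, hsr, abs_of_nonneg (Real.sqrt_nonneg s)]
        rw [this, Real.sq_sqrt hspos.le, div_pow, Real.sq_sqrt hspos.le]
        rw [hsum]; simp only [ha]; ring
      · have : Complex.I * (Real.sqrt s : ℂ) *
            (starRingEnd ℂ (Complex.I * (starRingEnd ℂ b) / (Real.sqrt s : ℂ))) = b := by
          simp only [map_div₀, map_mul, Complex.conj_I, Complex.conj_conj,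
            Complex.conj_ofReal]
          field_simp
          linear_combination (-1) * Complex.I_sq
        rw [this, hb]; ring
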